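/- If ρ = ρ_c := 4/(λmax(λmax − 2)) with λmax > 2, then the pair (x(t), λ(t)) with x(t) = −1 + (2/λmax − 1)λ(t) solves the system x' = (x + λ)² − 1, λ' = ρ λ(λmax − λ), for every solution λ of the second equation with values in (0, λmax). -/

import Mathlib

theorem stmt3 (lmax ρ : ℝ) (hl : 2 < lmax) (hρ : ρ = 4 / (lmax * (lmax - 2)))
    (lam : ℝ → ℝ)
    (hlam : ∀ t, HasDerivAt lam (ρ * lam t * (lmax - lam t)) t)
    (hrange : ∀ t, lam t ∈ Set.Ioo 0 lmax) :
    ∀ t, HasDerivAt (fun t => -1 + (2 / lmax - 1) * lam t)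
      (((-1 + (2 / lmax - 1) * lam t) + lam t) ^ 2 - 1) t := by
  intro t
  have h := ((hlam t).const_mul (2 / lmax - 1)).const_add (-1)
  refine h.congr_deriv ?_
  have h0 : lmax ≠ 0 := by linarith
  have h2 : lmax - 2 ≠ 0 := by linarith
  subst hρ
  field_simp
  ring
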